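/- Let p be prime and J a sequence of elements of (ℤ/pℤ)² with |J| = 3p-2 or |J| = 3p-1. If J has no zero-sum subsequence of length p, then the number of zero-sum subsequences of J of length 2p is congruent to -1 modulo p. -/

import Mathlib

open Finset MvPolynomial

private lemma multiset_powerset_map {α β : Type*} (f : α → β) (s : Multiset α) :
    (s.map f).powerset = s.powerset.map (Multiset.map f) := by
  refine Quotient.inductionOn s fun l => ?_
  show ((↑(l.map f) : Multiset β)).powerset
      = ((↑l : Multiset α)).powerset.map (Multiset.map f)
  rw [Multiset.powerset_coe', Multiset.powerset_coe', List.sublists'_map]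
  simp [Multiset.map_coe, List.map_map, Function.comp_def]

private lemma powerset_filter_card {α : Type*} (l : List α) (Q : Multiset α → Prop)
    [DecidablePred Q] :
    ((↑l : Multiset α).powerset.filter Q).card
      = ((Finset.univ : Finset (Finset (Fin l.length))).filter
          (fun T => Q (T.val.map l.get))).card := by
  have h1 : (↑l : Multiset α) = (Finset.univ : Finset (Fin l.length)).val.map l.get := by
    rw [Fin.univ_def]
    show _ = Multiset.map l.get (↑(List.finRange l.length))
    rw [Multiset.map_coe, List.map_get_finRange]
  rw [← Multiset.countP_eq_card_filter]
  conv_lhs => rw [h1]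
  rw [multiset_powerset_map, Multiset.countP_map, ← Multiset.countP_eq_card_filter]
  rw [Finset.card_def, Finset.filter_val, Multiset.countP_eq_card_filter]
  rw [← Multiset.countP_eq_card_filter]
  have h2 : ((Finset.univ : Finset (Finset (Fin l.length)))).val
      = ((Finset.univ : Finset (Fin l.length)).val.powerset).pmap Finset.mk
          (fun _t h => Multiset.nodup_of_le (Multiset.mem_powerset.1 h) Finset.univ.nodup) := rfl
  rw [h2, Multiset.pmap_eq_map_attach, ← Multiset.countP_eq_card_filter,
    Multiset.countP_map, ← Multiset.countP_eq_card_filter]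
  exact (Multiset.countP_attach _ _).symm

private lemma card_support_eq (p : ℕ) [Fact p.Prime] {n : ℕ} (T : Finset (Fin n)) :
    (Finset.univ.filter (fun x : Fin n → ZMod p => ∀ i, x i ≠ 0 ↔ i ∈ T)).card
      = (p - 1) ^ T.card := by
  rw [← Fintype.card_subtype]
  rw [Fintype.card_congr (Equiv.subtypePiEquivPi (p := fun i (y : ZMod p) => y ≠ 0 ↔ i ∈ T))]
  rw [Fintype.card_pi]
  have hcard : ∀ i : Fin n, Fintype.card {y : ZMod p // y ≠ 0 ↔ i ∈ T}
      = if i ∈ T then p - 1 else 1 := by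
    intro i
    by_cases hi : i ∈ T
    · rw [if_pos hi]
      rw [Fintype.card_congr (Equiv.subtypeEquivRight (q := fun y : ZMod p => ¬ y = 0)
        (fun y => by simp [hi]))]
      have : Fintype.card {y : ZMod p // ¬ y = 0}
          = Fintype.card (ZMod p) - Fintype.card {y : ZMod p // y = 0} :=
        Fintype.card_subtype_compl _
      rw [this, Fintype.card_subtype_eq, ZMod.card]
    · rw [if_neg hi]
      rw [Fintype.card_congr (Equiv.subtypeEquivRight (q := fun y : ZMod p => y = 0)
        (fun y => by simp [hi]))]
      exact Fintype.card_subtype_eq (0 : ZMod p)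
  simp only [hcard]
  rw [Finset.prod_ite_mem, Finset.univ_inter, Finset.prod_const]

theorem reiher_cor24 (p : ℕ) (hp : p.Prime) (J : Multiset (ZMod p × ZMod p))
    (hJ : Multiset.card J = 3 * p - 2 ∨ Multiset.card J = 3 * p - 1)
    (hno : ¬ ∃ S ≤ J, Multiset.card S = p ∧ S.sum = 0) :
    ((J.powerset.filter (fun S => Multiset.card S = 2 * p ∧ S.sum = 0)).card : ZMod p)
      = -1 := by
  haveI := Fact.mk hp
  haveI : NeZero p := ⟨hp.pos.ne'⟩
  revert hJ hno
  refine Quotient.inductionOn J ?_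
  intro l hJ hno
  simp only [Multiset.quot_mk_to_coe] at hJ hno ⊢
  set n := l.length with hn
  have hlen : Multiset.card (↑l : Multiset (ZMod p × ZMod p)) = n := by simp [hn]
  rw [hlen] at hJ
  set v : Fin n → ZMod p × ZMod p := l.get with hv
  -- coefficient functions
  set c : Fin 3 → Fin n → ZMod p := ![fun _ => 1, fun i => (v i).1, fun i => (v i).2] with hc
  set F : Fin 3 → MvPolynomial (Fin n) (ZMod p) :=
    fun j => ∑ i : Fin n, c j i • X i ^ (p - 1) with hF
  have hdeg : ∑ j : Fin 3, (F j).totalDegree < Fintype.card (Fin n) := by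
    have hb : ∀ j, (F j).totalDegree ≤ p - 1 := fun j =>
      totalDegree_finsetSum_le fun i _ =>
        (totalDegree_smul_le _ _).trans (totalDegree_X_pow ..).le
    have h2 : ∑ j : Fin 3, (F j).totalDegree ≤ 3 * (p - 1) := by
      calc ∑ j : Fin 3, (F j).totalDegree ≤ ∑ _j : Fin 3, (p - 1) :=
            Finset.sum_le_sum fun j _ => hb j
        _ = 3 * (p - 1) := by simp [Finset.sum_const, mul_comm]
    have := hp.two_le
    rw [Fintype.card_fin]
    omega
  have hdvd := char_dvd_card_solutions_of_fintype_sum_lt p hdeg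
  -- support
  set supp : (Fin n → ZMod p) → Finset (Fin n) :=
    fun x => Finset.univ.filter (fun i => x i ≠ 0) with hsupp
  set A : Finset (Finset (Fin n)) := Finset.univ.filter
    (fun T : Finset (Fin n) => ((T.card : ZMod p) = 0 ∧ ∑ i ∈ T, v i = 0)) with hA0
  have heval : ∀ (x : Fin n → ZMod p) (j : Fin 3),
      eval x (F j) = ∑ i ∈ supp x, c j i := by
    intro x j
    rw [hF]
    simp only [map_sum, smul_eq_C_mul, eval_mul, eval_C, eval_pow, eval_X]
    rw [Finset.sum_filter]
    refine Finset.sum_congr rfl fun i _ => ?_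
    rw [ZMod.pow_card_sub_one]
    split_ifs <;> simp
  have hcond : ∀ x : Fin n → ZMod p, (∀ j, eval x (F j) = 0) ↔
      ((((supp x).card : ℕ) : ZMod p) = 0 ∧ ∑ i ∈ supp x, v i = 0) := by
    intro x
    constructor
    · intro h
      refine ⟨?_, ?_⟩
      · have h0 := h 0
        rw [heval] at h0
        rw [Finset.cast_card]
        simpa [hc] using h0
      · have h1 := h 1
        have h2 := h 2
        rw [heval] at h1 h2
        have e1 : (∑ i ∈ supp x, v i).1 = 0 := by
          rw [Prod.fst_sum]; simpa [hc] using h1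
        have e2 : (∑ i ∈ supp x, v i).2 = 0 := by
          rw [Prod.snd_sum]; simpa [hc] using h2
        exact Prod.ext e1 e2
    · rintro ⟨h0, hs⟩ j
      rw [heval]
      fin_cases j
      · rw [Finset.cast_card] at h0
        simpa [hc] using h0
      · simpa [hc, ← Prod.fst_sum] using congrArg Prod.fst hs
      · simpa [hc, ← Prod.snd_sum] using congrArg Prod.snd hs
  -- counting
  have hN : Fintype.card {x : Fin n → ZMod p // ∀ j, eval x (F j) = 0}
      = ∑ T ∈ A, (p - 1) ^ T.card := by
    rw [Fintype.card_subtype]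
    rw [Finset.filter_congr (fun x _ => hcond x)]
    rw [Finset.card_eq_sum_card_fiberwise (f := supp) (t := A)
      (fun x hx => by
        rw [Finset.mem_coe]
        simp only [hA0, Finset.mem_filter]
        exact ⟨Finset.mem_univ _, (Finset.mem_filter.1 (Finset.mem_coe.1 hx)).2⟩)]
    refine Finset.sum_congr rfl fun T hT => ?_
    rw [← card_support_eq p T]
    congr 1
    ext x
    simp only [Finset.mem_filter, Finset.mem_univ, true_and]
    constructor
    · rintro ⟨hcx, hsx⟩ i
      rw [← hsx]
      simp [hsupp]
    · intro hiff
      have hsx : supp x = T := by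
        ext i
        simp only [hsupp, Finset.mem_filter, Finset.mem_univ, true_and]
        exact hiff i
      rw [hsx]
      refine ⟨?_, rfl⟩
      rw [hA0, Finset.mem_filter] at hT
      exact hT.2
  -- all cards are 0 or 2p
  have hcards : ∀ T : Finset (Fin n), T ∈ A → T.card = 0 ∨ T.card = 2 * p := by
    intro T hT
    rw [hA0, Finset.mem_filter] at hT
    have h1 : p ∣ T.card := (ZMod.natCast_eq_zero_iff _ _).1 hT.2.1
    have h2 : T.card ≤ n := by
      have := Finset.card_le_univ T
      simpa using this
    have h3 : T.card ≠ p := by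
      intro hTp
      refine hno ⟨T.val.map v, ?_, ?_, ?_⟩
      · have hle : T.val ≤ (Finset.univ : Finset (Fin n)).val :=
          Finset.val_le_iff.2 (Finset.subset_univ T)
        have := Multiset.map_le_map (f := v) hle
        rwa [show Multiset.map v (Finset.univ : Finset (Fin n)).val = (↑l : Multiset _) by
          rw [Fin.univ_def]
          show Multiset.map l.get (↑(List.finRange n)) = _
          rw [Multiset.map_coe, List.map_get_finRange]] at this
      · rw [Multiset.card_map, ← Finset.card_def, hTp]
      · rw [← Finset.sum_eq_multiset_sum]
        exact hT.2.2
    obtain ⟨k, hk⟩ := h1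
    have hk3 : k < 3 := by
      by_contra hcon
      push_neg at hcon
      have : p * 3 ≤ p * k := Nat.mul_le_mul_left p hcon
      have := hp.two_le
      omega
    interval_cases k <;> omega
  -- cast the count to ZMod p
  have h0N : ((Fintype.card {x : Fin n → ZMod p // ∀ j, eval x (F j) = 0} : ℕ) : ZMod p) = 0 := by
    rw [ZMod.natCast_eq_zero_iff]
    convert hdvd using 2
  have hp1 : ((p - 1 : ℕ) : ZMod p) = -1 := by
    rw [Nat.cast_sub hp.one_le, ZMod.natCast_self, Nat.cast_one, zero_sub]
  have hsum : ((A.card : ℕ) : ZMod p) = 0 := by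
    have hthis := h0N
    rw [hN, Nat.cast_sum] at hthis
    simp only [Nat.cast_pow, hp1] at hthis
    rw [Finset.cast_card, ← hthis]
    refine Finset.sum_congr rfl fun T hT => ?_
    rcases hcards T hT with h | h
    · rw [h, pow_zero]
    · rw [h, pow_mul]
      norm_num
  set B := Finset.univ.filter (fun T : Finset (Fin n) =>
      T.card = 2 * p ∧ ∑ i ∈ T, v i = 0) with hB
  have hAB : A = insert ∅ B := by
    ext T
    rw [hA0, hB]
    simp only [Finset.mem_filter, Finset.mem_univ, true_and, Finset.mem_insert]
    constructor
    · intro hcT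
      rcases hcards T (by rw [hA0, Finset.mem_filter]; exact ⟨Finset.mem_univ _, hcT⟩) with h | h
      · left; exact Finset.card_eq_zero.1 h
      · right; exact ⟨h, hcT.2⟩
    · rintro (rfl | ⟨h1, h2⟩)
      · exact ⟨by simp, by simp⟩
      · refine ⟨?_, h2⟩
        rw [h1]
        push_cast
        simp
  have hnm : (∅ : Finset (Fin n)) ∉ B := by
    intro hmem
    rw [hB, Finset.mem_filter] at hmem
    have h1 := hmem.2.1
    simp only [Finset.card_empty] at h1
    have := hp.pos
    omega
  have hcardB : A.card = B.card + 1 := by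
    rw [hAB, Finset.card_insert_of_notMem hnm]
  have hBval : ((B.card : ℕ) : ZMod p) = -1 := by
    have hthis := hsum
    rw [hcardB] at hthis
    push_cast at hthis
    linear_combination hthis
  rw [powerset_filter_card l
    (fun S => Multiset.card S = 2 * p ∧ S.sum = 0)]
  show ((Finset.filter (fun T : Finset (Fin n) =>
      Multiset.card (Multiset.map l.get T.val) = 2 * p ∧ (Multiset.map l.get T.val).sum = 0)
      Finset.univ).card : ZMod p) = -1
  have hset : Finset.filter (fun T : Finset (Fin n) =>
      Multiset.card (Multiset.map l.get T.val) = 2 * p ∧ (Multiset.map l.get T.val).sum = 0)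
      Finset.univ = B := by
    rw [hB]
    refine Finset.filter_congr fun T _ => ?_
    rw [Multiset.card_map, ← Finset.card_def, ← Finset.sum_eq_multiset_sum]
  rw [hset]
  exact hBval
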